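/- arXiv:1502.04084 — 6 statements merged into one kernel-verified Lean document; each statement's English description precedes it below -/
import Mathlib

section
/- Let m ≥ 0, σ(w) = w³ + m·w, and let w_L ≠ w_R be reals with q = (σ(w_L) − σ(w_R))/(w_L − w_R). Then the Liu admissibility criterion for the 1-shock from w_L to w_R — namely, for every w strictly between w_L and w_R (so w ≠ w_R), (σ(w) − σ(w_R))/(w − w_R) ≥ q — holds if and only if (w_R − w_L)·(w_R + 2·w_L) ≥ 0. -/
/-- For `σ(w) = w³ + m·w`, `m ≥ 0`, `w_L ≠ w_R`, the Liu criterion for the 1-shock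
from `w_L` to `w_R` (for every `w` strictly between `w_L` and `w_R`,
`(σ(w)-σ(w_R))/(w-w_R) ≥ q` with `q` the chord slope) holds iff
`(w_R - w_L)(w_R + 2w_L) ≥ 0`. -/
theorem stmt_8 (m : ℝ) (hm : 0 ≤ m) (σ : ℝ → ℝ) (hσ : ∀ w, σ w = w ^ 3 + m * w)
    (wL wR : ℝ) (hne : wL ≠ wR)
    (q : ℝ) (hq : q = (σ wL - σ wR) / (wL - wR)) :
    (∀ w : ℝ, ((wL < w ∧ w < wR) ∨ (wR < w ∧ w < wL)) →
        (σ w - σ wR) / (w - wR) ≥ q) ↔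
    (wR - wL) * (wR + 2 * wL) ≥ 0 := by
  have key : ∀ a b : ℝ, a ≠ b → (σ a - σ b) / (a - b) = a ^ 2 + a * b + b ^ 2 + m := by
    intro a b hab
    have h : a - b ≠ 0 := sub_ne_zero.mpr hab
    rw [hσ, hσ]
    field_simp
    ring
  have hqv : q = wL ^ 2 + wL * wR + wR ^ 2 + m := by rw [hq, key wL wR hne]
  constructor
  · intro h
    rcases lt_or_gt_of_ne hne with hlt | hlt
    · -- wL < wR : need wR + 2*wL ≥ 0
      by_contra hc
      push_neg at hc
      have h2 : wR + 2 * wL < 0 := by nlinarith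
      set ε := min ((wR - wL) / 2) ((-(2 * wL + wR)) / 2) with hε
      have hε1 : 0 < ε := by
        apply lt_min <;> linarith
      set w := wL + ε with hw
      have hw1 : wL < w := by simp [hw]; linarith
      have hw2 : w < wR := by
        have := min_le_left ((wR - wL) / 2) ((-(2 * wL + wR)) / 2)
        simp only [hw]; linarith
      have hw3 : w + wL + wR < 0 := by
        have := min_le_right ((wR - wL) / 2) ((-(2 * wL + wR)) / 2)
        simp only [hw]; linarith
      have hwne : w ≠ wR := ne_of_lt hw2
      have := h w (Or.inl ⟨hw1, hw2⟩)
      rw [key w wR hwne, hqv] at this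
      nlinarith
    · -- wR < wL : need wR + 2*wL ≤ 0
      by_contra hc
      push_neg at hc
      have h2 : 0 < wR + 2 * wL := by nlinarith
      set ε := min ((wL - wR) / 2) ((2 * wL + wR) / 2) with hε
      have hε1 : 0 < ε := by
        apply lt_min <;> linarith
      set w := wL - ε with hw
      have hw1 : w < wL := by simp [hw]; linarith
      have hw2 : wR < w := by
        have := min_le_left ((wL - wR) / 2) ((2 * wL + wR) / 2)
        simp only [hw]; linarith
      have hw3 : 0 < w + wL + wR := by
        have := min_le_right ((wL - wR) / 2) ((2 * wL + wR) / 2)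
        simp only [hw]; linarith
      have hwne : w ≠ wR := (ne_of_lt hw2).symm
      have := h w (Or.inr ⟨hw2, hw1⟩)
      rw [key w wR hwne, hqv] at this
      nlinarith
  · intro h w hw
    rcases hw with ⟨h1, h2⟩ | ⟨h1, h2⟩
    · have hwne : w ≠ wR := ne_of_lt h2
      rw [key w wR hwne, hqv]
      have hA : 0 ≤ wR + 2 * wL := by nlinarith
      nlinarith [mul_pos (sub_pos.mpr h1) (show (0:ℝ) < w + wL + wR by linarith)]
    · have hwne : w ≠ wR := (ne_of_lt h1).symm
      rw [key w wR hwne, hqv]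
      have hA : wR + 2 * wL ≤ 0 := by nlinarith
      nlinarith [mul_pos (sub_pos.mpr h2) (show (0:ℝ) < -(w + wL + wR) by linarith)]
end

section
/- Let m ≥ 0 and σ(w) = w³ + m·w, with entropy 𝒰(v,w) = v²/2 + w⁴/4 + m·w²/2 and entropy flux 𝒲(v,w) = −v·(w³ + m·w). If (v_L, w_L), (v_R, w_R) ∈ ℝ² and c ∈ ℝ satisfy the Rankine–Hugoniot relations c·(v_L − v_R) = σ(w_R) − σ(w_L) and c·(w_L − w_R) = v_R − v_L, then the entropy dissipation D = c·(𝒰(v_L,w_L) − 𝒰(v_R,w_R)) − (𝒲(v_L,w_L) − 𝒲(v_R,w_R)) equals −c·(w_L − w_R)³·(w_L + w_R)/4. -/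
/-- For `σ(w) = w³ + m·w`, entropy `𝒰(v,w) = v²/2 + w⁴/4 + m·w²/2`, entropy flux
`𝒲(v,w) = -v·σ(w)`: under the Rankine–Hugoniot relations, the entropy dissipation
equals `-c·(w_L - w_R)³·(w_L + w_R)/4`. -/
theorem stmt_9 (m : ℝ) (hm : 0 ≤ m) (σ : ℝ → ℝ) (hσ : ∀ w, σ w = w ^ 3 + m * w)
    (U W : ℝ → ℝ → ℝ)
    (hU : ∀ v w, U v w = v ^ 2 / 2 + w ^ 4 / 4 + m * w ^ 2 / 2)
    (hW : ∀ v w, W v w = -(v * (w ^ 3 + m * w)))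
    (vL wL vR wR c : ℝ)
    (h1 : c * (vL - vR) = σ wR - σ wL)
    (h2 : c * (wL - wR) = vR - vL)
    (D : ℝ) (hD : D = c * (U vL wL - U vR wR) - (W vL wL - W vR wR)) :
    D = -c * (wL - wR) ^ 3 * (wL + wR) / 4 := by
  simp only [hσ] at h1
  simp only [hU, hW] at hD
  linear_combination hD + ((vL+vR)/2)*h1 + ((wL^3+m*wL+wR^3+m*wR)/2)*h2
end

section
/- Let m > 0, σ(w) = w³ + m·w, 𝒰(v,w) = v²/2 + w⁴/4 + m·w²/2, 𝒲(v,w) = −v·(w³ + m·w). Suppose (v_L, w_L), (v_R, w_R) with w_L ≠ w_R satisfy the Rankine–Hugoniot relations with speed c, and let D = c·(𝒰(v_L,w_L) − 𝒰(v_R,w_R)) − (𝒲(v_L,w_L) − 𝒲(v_R,w_R)). Then: (i) if c < 0 (a 1-shock), D ≤ 0 if and only if w_R² ≥ w_L²; (ii) if c > 0 (a 2-shock), D ≤ 0 if and only if w_L² ≥ w_R²; (iii) if c ≠ 0, D = 0 if and only if w_R = −w_L. -/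
/-- For `σ(w) = w³ + m·w`, `m > 0`, a shock satisfying the Rankine–Hugoniot relations
with speed `c` and dissipation `D`: (i) if `c < 0`, `D ≤ 0 ↔ w_R² ≥ w_L²`;
(ii) if `c > 0`, `D ≤ 0 ↔ w_L² ≥ w_R²`; (iii) if `c ≠ 0`, `D = 0 ↔ w_R = -w_L`. -/
theorem stmt_10 (m : ℝ) (hm : 0 < m) (σ : ℝ → ℝ) (hσ : ∀ w, σ w = w ^ 3 + m * w)
    (U W : ℝ → ℝ → ℝ)
    (hU : ∀ v w, U v w = v ^ 2 / 2 + w ^ 4 / 4 + m * w ^ 2 / 2)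
    (hW : ∀ v w, W v w = -(v * (w ^ 3 + m * w)))
    (vL wL vR wR c : ℝ) (hne : wL ≠ wR)
    (h1 : c * (vL - vR) = σ wR - σ wL)
    (h2 : c * (wL - wR) = vR - vL)
    (D : ℝ) (hD : D = c * (U vL wL - U vR wR) - (W vL wL - W vR wR)) :
    (c < 0 → (D ≤ 0 ↔ wR ^ 2 ≥ wL ^ 2)) ∧
    (c > 0 → (D ≤ 0 ↔ wL ^ 2 ≥ wR ^ 2)) ∧
    (c ≠ 0 → (D = 0 ↔ wR = -wL)) := by
  rw [hσ, hσ] at h1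
  have hv : vR = vL + c * (wL - wR) := by linarith
  have hc2 : c ^ 2 * (wL - wR) = wL ^ 3 - wR ^ 3 + m * (wL - wR) := by
    linear_combination c * h2 - h1
  have hDval : D = c * (wL - wR) ^ 2 * (wR ^ 2 - wL ^ 2) / 4 := by
    rw [hD, hU, hU, hW, hW, hv]
    linear_combination (-vL - c * (wL - wR) / 2) * hc2
  have hk : 0 < (wL - wR) ^ 2 := by
    have : wL - wR ≠ 0 := sub_ne_zero.mpr hne
    positivity
  refine ⟨fun hc => ?_, fun hc => ?_, fun hc => ?_⟩
  · constructor
    · intro hDle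
      nlinarith [mul_pos (neg_pos.mpr hc) hk]
    · intro hge
      nlinarith [mul_pos (neg_pos.mpr hc) hk]
  · constructor
    · intro hDle
      nlinarith [mul_pos hc hk]
    · intro hge
      nlinarith [mul_pos hc hk]
  · constructor
    · intro hD0
      have hsq : wR ^ 2 - wL ^ 2 = 0 := by
        have hck : c * (wL - wR) ^ 2 ≠ 0 := mul_ne_zero hc (ne_of_gt hk)
        have : c * (wL - wR) ^ 2 * (wR ^ 2 - wL ^ 2) = 0 := by
          rw [hDval] at hD0; linarith
        exact (mul_eq_zero.mp this).resolve_left hck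
      have : (wR - wL) * (wR + wL) = 0 := by ring_nf; linarith [hsq]
      rcases mul_eq_zero.mp this with h | h
      · exact absurd (by linarith : wL = wR) hne
      · linarith
    · intro hR
      rw [hDval, hR]; ring
end

section
/- Let m > 0, σ(w) = w³ + m·w, and suppose (v_L, w_L), (v_R, w_R) with w_L ≠ w_R satisfy the Rankine–Hugoniot relations with speed c = −s(w_L, w_R) < 0 (a 1-shock), w_L·w_R ≥ 0, and the Liu criterion (w_R − w_L)·(w_R + 2·w_L) ≥ 0. Then either (w_R < w_L ≤ 0 and v_R < v_L) or (0 ≤ w_L < w_R and v_R > v_L). -/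
/-- For `σ(w) = w³ + m·w`, `m > 0`: a 1-shock (speed `c = -s(w_L,w_R) < 0`) satisfying
the Rankine–Hugoniot relations, with `w_L·w_R ≥ 0` and the Liu criterion
`(w_R - w_L)(w_R + 2w_L) ≥ 0`, satisfies either (`w_R < w_L ≤ 0` and `v_R < v_L`)
or (`0 ≤ w_L < w_R` and `v_R > v_L`). -/
theorem stmt_13 (m : ℝ) (hm : 0 < m) (σ : ℝ → ℝ) (hσ : ∀ w, σ w = w ^ 3 + m * w)
    (vL wL vR wR : ℝ) (hne : wL ≠ wR)
    (c : ℝ) (hc : c = -Real.sqrt ((σ wL - σ wR) / (wL - wR)))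
    (h1 : c * (vL - vR) = σ wR - σ wL)
    (h2 : c * (wL - wR) = vR - vL)
    (hsign : wL * wR ≥ 0)
    (hLiu : (wR - wL) * (wR + 2 * wL) ≥ 0) :
    (wR < wL ∧ wL ≤ 0 ∧ vR < vL) ∨ (0 ≤ wL ∧ wL < wR ∧ vR > vL) := by
  have hd : wL - wR ≠ 0 := sub_ne_zero.mpr hne
  have hratio : (σ wL - σ wR) / (wL - wR) = wL ^ 2 + wL * wR + wR ^ 2 + m := by
    rw [hσ, hσ]; field_simp; ring
  have hpos : 0 < (σ wL - σ wR) / (wL - wR) := by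
    rw [hratio]; nlinarith [sq_nonneg (wL + wR), sq_nonneg wL, sq_nonneg wR]
  have hcneg : c < 0 := by
    rw [hc, neg_lt, neg_zero]; exact Real.sqrt_pos.mpr hpos
  rcases lt_or_gt_of_ne hne with h | h
  · -- wL < wR
    have hwL : 0 ≤ wL := by
      by_contra hneg
      push_neg at hneg
      have hwR : wR ≤ 0 := nonpos_of_mul_nonneg_right hsign hneg
      nlinarith
    refine Or.inr ⟨hwL, h, ?_⟩
    nlinarith
  · -- wR < wL
    have hwL : wL ≤ 0 := by
      by_contra hneg
      push_neg at hneg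
      have hwR : 0 ≤ wR := nonneg_of_mul_nonneg_left (by linarith [mul_comm wL wR, hsign] : (0:ℝ) ≤ wR * wL) hneg
      nlinarith
    refine Or.inl ⟨h, hwL, ?_⟩
    nlinarith
end

section
/- Let m > 0, σ(w) = w³ + m·w, and suppose (v_L, w_L), (v_R, w_R) with w_L ≠ w_R satisfy the Rankine–Hugoniot relations with speed c = +s(w_L, w_R) > 0 (a 2-shock), w_L·w_R ≥ 0, and the Liu criterion for 2-shocks (w_L − w_R)·(w_L + 2·w_R) ≥ 0. Then either (w_L < w_R ≤ 0 and v_R < v_L) or (0 ≤ w_R < w_L and v_R > v_L). -/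
/-- For `σ(w) = w³ + m·w`, `m > 0`: a 2-shock (speed `c = +s(w_L,w_R) > 0`) satisfying
the Rankine–Hugoniot relations, with `w_L·w_R ≥ 0` and the Liu criterion for 2-shocks
`(w_L - w_R)(w_L + 2w_R) ≥ 0`, satisfies either (`w_L < w_R ≤ 0` and `v_R < v_L`)
or (`0 ≤ w_R < w_L` and `v_R > v_L`). -/
theorem stmt_14 (m : ℝ) (hm : 0 < m) (σ : ℝ → ℝ) (hσ : ∀ w, σ w = w ^ 3 + m * w)
    (vL wL vR wR : ℝ) (hne : wL ≠ wR)
    (c : ℝ) (hc : c = Real.sqrt ((σ wL - σ wR) / (wL - wR)))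
    (h1 : c * (vL - vR) = σ wR - σ wL)
    (h2 : c * (wL - wR) = vR - vL)
    (hsign : wL * wR ≥ 0)
    (hLiu : (wL - wR) * (wL + 2 * wR) ≥ 0) :
    (wL < wR ∧ wR ≤ 0 ∧ vR < vL) ∨ (0 ≤ wR ∧ wR < wL ∧ vR > vL) := by
  have hsub : wL - wR ≠ 0 := sub_ne_zero.mpr hne
  have hratio : (σ wL - σ wR) / (wL - wR) = wL ^ 2 + wL * wR + wR ^ 2 + m := by
    rw [hσ, hσ]
    field_simp
    ring
  have hqpos : 0 < wL ^ 2 + wL * wR + wR ^ 2 + m := by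
    nlinarith [sq_nonneg (wL + wR), sq_nonneg (wL - wR)]
  have hcpos : 0 < c := by
    rw [hc, hratio]; exact Real.sqrt_pos.mpr hqpos
  rcases lt_trichotomy wR 0 with hR | hR | hR
  · have hLw : wL < wR := by
      by_contra h
      push_neg at h
      have h' : wR < wL := lt_of_le_of_ne h (Ne.symm hne)
      have hL0 : wL ≤ 0 := by nlinarith
      nlinarith [mul_pos (sub_pos.mpr h') (by linarith : (0:ℝ) < -(wL + 2 * wR))]
    left
    refine ⟨hLw, le_of_lt hR, ?_⟩
    nlinarith [mul_pos hcpos (sub_pos.mpr hLw)]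
  · subst hR
    rcases lt_or_gt_of_ne hne with h | h
    · left
      refine ⟨h, le_refl _, ?_⟩
      nlinarith [mul_pos hcpos (sub_pos.mpr h)]
    · right
      refine ⟨le_refl _, h, ?_⟩
      nlinarith [mul_pos hcpos (sub_pos.mpr h)]
  · have hLw : wR < wL := by
      by_contra h
      push_neg at h
      have h' : wL < wR := lt_of_le_of_ne h hne
      have hL0 : 0 ≤ wL := by nlinarith
      nlinarith [mul_pos (sub_pos.mpr h') (by linarith : (0:ℝ) < wL + 2 * wR)]
    right
    refine ⟨le_of_lt hR, hLw, ?_⟩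
    nlinarith [mul_pos hcpos (sub_pos.mpr hLw)]
end

section
/- Let U_L, U_R ∈ ℝ, g : ℝ → ℝ, and s ∈ ℝ satisfying the Rankine–Hugoniot relation s·(U_L − U_R) = g(U_L) − g(U_R). Let x_d ∈ ℝ and define u(t,x) = U_L if x < x_d + s·t and u(t,x) = U_R if x ≥ x_d + s·t. Then for all reals a ≤ b, V ∈ ℝ, and Δt > 0: ∫_{a+V·Δt}^{b+V·Δt} u(Δt, x) dx − ∫_a^b u(0, x) dx = − [ ∫₀^{Δt} ( g(u(t, b + V·t)) − V·u(t, b + V·t) ) dt − ∫₀^{Δt} ( g(u(t, a + V·t)) − V·u(t, a + V·t) ) dt ]. -/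
open MeasureTheory intervalIntegral in
private lemma stmt19_intInt_step (A B p : ℝ) (c d : ℝ) :
    IntervalIntegrable (fun x => if x < p then A else B) volume c d := by
  have hm : Measurable fun x : ℝ => if x < p then A else B :=
    Measurable.ite measurableSet_Iio measurable_const measurable_const
  rw [intervalIntegrable_iff]
  refine Integrable.mono' (g := fun _ => |A| + |B|)
    (integrableOn_const (hs := measure_Ioc_lt_top.ne) (hC := enorm_ne_top)) hm.aestronglyMeasurable ?_
  filter_upwards with x
  split_ifs <;> rw [Real.norm_eq_abs] <;> [linarith [abs_nonneg B]; linarith [abs_nonneg A]]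

private lemma stmt19_ae_ne_real (p : ℝ) : ∀ᵐ x : ℝ, x ≠ p := by
  rw [MeasureTheory.ae_iff]
  simp only [not_not, Set.setOf_eq_eq_singleton]
  exact Real.volume_singleton

private lemma stmt19_integral_step_lt (A B p c d : ℝ) (h : c ≤ d) :
    (∫ x in c..d, (if x < p then A else B))
      = A * (min (max p c) d - c) + B * (d - min (max p c) d) := by
  set q := min (max p c) d with hqdef
  have hcq : c ≤ q := le_min (le_max_right _ _) h
  have hqd : q ≤ d := min_le_right _ _
  have hsplit := intervalIntegral.integral_add_adjacent_intervals
    (stmt19_intInt_step A B p c q) (stmt19_intInt_step A B p q d)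
  have h1 : (∫ x in c..q, (if x < p then A else B)) = A * (q - c) := by
    have hc : (∫ x in c..q, (if x < p then A else B)) = ∫ x in c..q, A := by
      apply intervalIntegral.integral_congr_ae
      filter_upwards [stmt19_ae_ne_real p] with x hx hxI
      rw [Set.uIoc_of_le hcq] at hxI
      have hxp : x ≤ p := by
        rcases le_or_gt p c with hpc | hcp
        · exact absurd hxI.2 (by rw [hqdef]; simp [max_eq_right hpc]; intro _; linarith [hxI.1])
        · calc x ≤ q := hxI.2
            _ ≤ max p c := min_le_left _ _
            _ = p := max_eq_left hcp.le
      rw [if_pos (lt_of_le_of_ne hxp hx)]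
    rw [hc, intervalIntegral.integral_const, smul_eq_mul]; ring
  have h2 : (∫ x in q..d, (if x < p then A else B)) = B * (d - q) := by
    have hc : (∫ x in q..d, (if x < p then A else B)) = ∫ x in q..d, B := by
      apply intervalIntegral.integral_congr_ae
      filter_upwards with x hxI
      rw [Set.uIoc_of_le hqd] at hxI
      have hxp : p ≤ x := by
        rcases le_or_gt (max p c) d with hmd | hdm
        · have : q = max p c := min_eq_left hmd
          calc p ≤ max p c := le_max_left _ _
            _ = q := this.symm
            _ ≤ x := hxI.1.le
        · have : q = d := min_eq_right hdm.le
          exact absurd hxI.2 (not_le.mpr (this ▸ hxI.1))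
      rw [if_neg (not_lt.mpr hxp)]
    rw [hc, intervalIntegral.integral_const, smul_eq_mul]; ring
  rw [← hsplit, h1, h2]

private lemma stmt19_integral_step_le (A B p c d : ℝ) (h : c ≤ d) :
    (∫ x in c..d, (if x ≤ p then A else B))
      = A * (min (max p c) d - c) + B * (d - min (max p c) d) := by
  rw [← stmt19_integral_step_lt A B p c d h]
  apply intervalIntegral.integral_congr_ae
  filter_upwards [stmt19_ae_ne_real p] with x hx _
  by_cases hl : x < p
  · rw [if_pos hl, if_pos hl.le]
  · rw [if_neg hl, if_neg fun hle => hl (lt_of_le_of_ne hle hx)]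

private lemma stmt19_mul_clamp (k x T : ℝ) (hk : 0 < k) :
    k * min (max (x / k) 0) T = min (max x 0) (k * T) := by
  have h1 : max (x / k) 0 = max x 0 / k := by
    rw [← max_div_div_right hk.le, zero_div]
  have h2 : min (max x 0 / k) T = min (max x 0) (k * T) / k := by
    rw [← min_div_div_right hk.le]
    congr 1
    rw [mul_comm, mul_div_assoc, div_self hk.ne', mul_one]
  rw [h1, h2, mul_div_cancel₀ _ hk.ne']

set_option maxHeartbeats 4000000

/-- Exact integral conservation identity for a traveling discontinuity satisfying the
Rankine–Hugoniot relation `s·(U_L - U_R) = g(U_L) - g(U_R)`: over the space-time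
trapezoid swept by a cell `[a,b]` moving at mesh speed `V` during `[0, Δt]`, the change
of the cell integral equals minus the difference of the Lagrangian flux integrals
`g(u) - V·u` along the two moving interfaces. -/
theorem stmt_19 (UL UR : ℝ) (g : ℝ → ℝ) (s : ℝ)
    (hRH : s * (UL - UR) = g UL - g UR)
    (xd : ℝ) (u : ℝ → ℝ → ℝ)
    (hu : ∀ t x, u t x = if x < xd + s * t then UL else UR) :
    ∀ (a b : ℝ), a ≤ b → ∀ (V : ℝ) (Δt : ℝ), 0 < Δt →
      (∫ x in (a + V * Δt)..(b + V * Δt), u Δt x) - (∫ x in a..b, u 0 x) =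
        -((∫ t in (0:ℝ)..Δt, (g (u t (b + V * t)) - V * u t (b + V * t)))
          - (∫ t in (0:ℝ)..Δt, (g (u t (a + V * t)) - V * u t (a + V * t)))) := by
  intro a b hab V T hT
  have hstepint : ∀ c : ℝ,
      (∫ t in (0:ℝ)..T, (g (u t (c + V * t)) - V * u t (c + V * t)))
        = ∫ t in (0:ℝ)..T,
            (if c + V * t < xd + s * t then (g UL - V * UL) else (g UR - V * UR)) := by
    intro c
    apply intervalIntegral.integral_congr
    intro t _
    simp only [hu]
    split_ifs <;> ring
  have hsp1 : (∫ x in (a + V * T)..(b + V * T), u T x)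
      = UL * (min (max (xd + s * T) (a + V * T)) (b + V * T) - (a + V * T))
        + UR * ((b + V * T) - min (max (xd + s * T) (a + V * T)) (b + V * T)) := by
    rw [intervalIntegral.integral_congr (g := fun x => if x < xd + s * T then UL else UR)
      (fun x _ => hu T x), stmt19_integral_step_lt _ _ _ _ _ (by linarith)]
  have hsp0 : (∫ x in a..b, u 0 x)
      = UL * (min (max (xd + s * 0) a) b - a)
        + UR * (b - min (max (xd + s * 0) a) b) := by
    rw [intervalIntegral.integral_congr (g := fun x => if x < xd + s * 0 then UL else UR)
      (fun x _ => hu 0 x), stmt19_integral_step_lt _ _ _ _ _ hab]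
  rw [hsp1, hsp0, hstepint a, hstepint b]
  rcases lt_trichotomy s V with hk | hk | hk
  · -- s - V < 0
    have hkp : 0 < V - s := by linarith
    have hcond : ∀ c : ℝ,
        (∫ t in (0:ℝ)..T,
            (if c + V * t < xd + s * t then (g UL - V * UL) else (g UR - V * UR)))
          = ∫ t in (0:ℝ)..T,
              (if t < (xd - c) / (V - s) then (g UL - V * UL) else (g UR - V * UR)) := by
      intro c
      apply intervalIntegral.integral_congr
      intro t _
      have hiff : (c + V * t < xd + s * t) ↔ (t < (xd - c) / (V - s)) := by
        rw [lt_div_iff₀ hkp]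
        constructor <;> intro h <;> nlinarith
      simp only [hiff]
    rw [hcond a, hcond b,
      stmt19_integral_step_lt _ _ ((xd - a) / (V - s)) 0 T hT.le,
      stmt19_integral_step_lt _ _ ((xd - b) / (V - s)) 0 T hT.le]
    have hma := stmt19_mul_clamp (V - s) (xd - a) T hkp
    have hmb := stmt19_mul_clamp (V - s) (xd - b) T hkp
    have hkT : 0 < (V - s) * T := mul_pos hkp hT
    have key : min (max (xd + s * T) (a + V * T)) (b + V * T)
        - min (max (xd + s * 0) a) b - V * T
        = min (max (xd - b) 0) ((V - s) * T) - min (max (xd - a) 0) ((V - s) * T) := by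
      simp only [min_def, max_def]
      split_ifs <;> linarith
    linear_combination (UL - UR) * key
      - (UL - UR) * hmb + (UL - UR) * hma
      + ((min (max ((xd - a) / (V - s)) 0) T) - (min (max ((xd - b) / (V - s)) 0) T)) * hRH
  · -- s = V
    subst hk
    have hF : g UL - s * UL = g UR - s * UR := by linarith [hRH]
    have hconst : ∀ c : ℝ,
        (∫ t in (0:ℝ)..T,
            (if c + s * t < xd + s * t then (g UL - s * UL) else (g UR - s * UR)))
          = (g UL - s * UL) * T := by
      intro c
      rw [intervalIntegral.integral_congr (g := fun _ => g UL - s * UL)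
        (fun t _ => by split_ifs <;> [rfl; exact hF.symm])]
      rw [intervalIntegral.integral_const, smul_eq_mul]; ring
    rw [hconst a, hconst b]
    have hQ : min (max (xd + s * T) (a + s * T)) (b + s * T)
        = min (max (xd + s * 0) a) b + s * T := by
      simp only [min_def, max_def]
      split_ifs <;> linarith
    rw [hQ]; ring
  · -- s - V > 0
    have hkp : 0 < s - V := by linarith
    have hcond : ∀ c : ℝ,
        (∫ t in (0:ℝ)..T,
            (if c + V * t < xd + s * t then (g UL - V * UL) else (g UR - V * UR)))
          = ∫ t in (0:ℝ)..T,
              (if t ≤ (c - xd) / (s - V) then (g UR - V * UR) else (g UL - V * UL)) := by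
      intro c
      apply intervalIntegral.integral_congr
      intro t _
      have hiff : (c + V * t < xd + s * t) ↔ ¬ (t ≤ (c - xd) / (s - V)) := by
        rw [not_le, div_lt_iff₀ hkp]
        constructor <;> intro h <;> nlinarith
      simp only [hiff, ite_not]
    rw [hcond a, hcond b,
      stmt19_integral_step_le _ _ ((a - xd) / (s - V)) 0 T hT.le,
      stmt19_integral_step_le _ _ ((b - xd) / (s - V)) 0 T hT.le]
    have hma := stmt19_mul_clamp (s - V) (a - xd) T hkp
    have hmb := stmt19_mul_clamp (s - V) (b - xd) T hkp
    have hkT : 0 < (s - V) * T := mul_pos hkp hT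
    have key : min (max (xd + s * T) (a + V * T)) (b + V * T)
        - min (max (xd + s * 0) a) b - V * T
        = min (max (b - xd) 0) ((s - V) * T) - min (max (a - xd) 0) ((s - V) * T) := by
      simp only [min_def, max_def]
      split_ifs <;> linarith
    linear_combination (UL - UR) * key
      - (UL - UR) * hmb + (UL - UR) * hma
      + ((min (max ((b - xd) / (s - V)) 0) T) - (min (max ((a - xd) / (s - V)) 0) T)) * hRH
end
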